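/- Under the same hypotheses (T ∘ f = h component-wise invertible and differentiable), the Jacobian of T^{-1} with respect to u satisfies: the (i,j) entry of ∇_u T^{-1}(u) is zero whenever j is not an ancestor of i in the causal graph and j ≠ i. -/

import Mathlib

/-- Causal consistency of the inverse: suppose `S = T⁻¹` is differentiable and satisfies
`S (h u) = f u` for all `u`, where each `f_i` depends only on the `u_j` for `j` an
ancestor of `i` in the causal graph (given by the parent sets `pa`) or `j = i`, and
`h u i = H i (u i)` is a component-wise diffeomorphism.  Then the `(i,j)` entry of
`∇_u T⁻¹(u)` is zero whenever `j` is not an ancestor of `i` and `j ≠ i`. -/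
theorem causal_consistency_inverse {d : ℕ}
    (pa : Fin d → Finset (Fin d))
    (f : (Fin d → ℝ) → (Fin d → ℝ))
    (hfdep : ∀ i : Fin d, ∀ u v : Fin d → ℝ,
      (∀ j, (Relation.TransGen (fun a b : Fin d => a ∈ pa b) j i ∨ j = i) →
        u j = v j) → f u i = f v i)
    (H : Fin d → ℝ → ℝ)
    (hHbij : ∀ i, Function.Bijective (H i))
    (hH : ∀ i, Differentiable ℝ (H i)) (hH' : ∀ i t, deriv (H i) t ≠ 0)
    (T S : (Fin d → ℝ) → (Fin d → ℝ))
    (hSl : Function.LeftInverse S T) (hSr : Function.RightInverse S T)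
    (hSdiff : Differentiable ℝ S)
    (hSh : ∀ u : Fin d → ℝ, S (fun i => H i (u i)) = f u) :
    ∀ u : Fin d → ℝ, ∀ i j : Fin d,
      ¬ Relation.TransGen (fun a b : Fin d => a ∈ pa b) j i → j ≠ i →
      fderiv ℝ S u (Pi.single j 1) i = 0 := by
  intro u i j hanc hne
  classical
  set w : Fin d → ℝ := Pi.single j 1 with hw
  -- base point in `v`-coordinates
  set v : Fin d → ℝ := fun k => Function.invFun (H k) (u k) with hv
  have key : ∀ s : ℝ, S (u + s • w)
      = f (Function.update v j (Function.invFun (H j) (u j + s))) := by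
    intro s
    have hup : (u + s • w)
        = fun k => H k ((Function.update v j (Function.invFun (H j) (u j + s))) k) := by
      funext k
      by_cases hk : k = j
      · subst hk
        simp [hw, Function.update_self,
          Function.rightInverse_invFun (hHbij k).2 (u k + s)]
      · simp [hw, hv, Function.update_of_ne hk, Pi.single_eq_of_ne hk,
          Function.rightInverse_invFun (hHbij k).2 (u k)]
    rw [hup, hSh]
  have hconst : ∀ s : ℝ, S (u + s • w) i = S u i := by
    intro s
    have h0 := key 0
    have hs := key s
    have hu0 : u + (0 : ℝ) • w = u := by simp
    rw [hu0] at h0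
    have hfeq : f (Function.update v j (Function.invFun (H j) (u j + s))) i
        = f (Function.update v j (Function.invFun (H j) (u j + 0))) i := by
      apply hfdep
      intro k hk
      have hkj : k ≠ j := by
        rintro rfl
        rcases hk with h | h
        · exact hanc h
        · exact hne h
      simp [Function.update_of_ne hkj]
    calc S (u + s • w) i = _ := by rw [hs]
      _ = _ := hfeq
      _ = S u i := by rw [← h0]
  -- differentiate the constant function
  have hline : HasDerivAt (fun t : ℝ => u + t • w) w 0 := by
    simpa using ((hasDerivAt_id (0 : ℝ)).smul_const w).const_add u
  have hS : HasFDerivAt S (fderiv ℝ S u) (u + (0 : ℝ) • w) := by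
    simpa using (hSdiff (u + (0 : ℝ) • w)).hasFDerivAt
  have hcomp : HasDerivAt (fun t : ℝ => S (u + t • w)) (fderiv ℝ S u w) 0 :=
    hS.comp_hasDerivAt 0 hline
  have hproj : HasDerivAt (fun t : ℝ => S (u + t • w) i) (fderiv ℝ S u w i) 0 := by
    have := (ContinuousLinearMap.proj (R := ℝ) (φ := fun _ : Fin d => ℝ) i).hasFDerivAt.comp_hasDerivAt 0 hcomp
    simpa [Function.comp_def] using this
  have hconstf : (fun t : ℝ => S (u + t • w) i) = fun _ => S u i := by
    funext t; exact hconst t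
  have hzero : HasDerivAt (fun t : ℝ => S (u + t • w) i) 0 0 := by
    rw [hconstf]; exact hasDerivAt_const 0 _
  have := hproj.unique hzero
  simpa [hw] using this
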